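/- Let ε ∈ (−1, 0) (positive skew), σ > 0, μ ∈ ℝ, c > μ. Then the ESN activation reduction exceeds the Gaussian one: (1−ε)²·φ((c−μ)/((1−ε)σ))·σ − (1−ε)·[1 − Φ((c−μ)/((1−ε)σ))]·(c−μ) > φ((c−μ)/σ)·σ − [1 − Φ((c−μ)/σ)]·(c−μ). -/

import Mathlib

open MeasureTheory Real Set ProbabilityTheory Filter

noncomputable def phi (t : ℝ) : ℝ := Real.exp (-t^2/2) / Real.sqrt (2*Real.pi)
noncomputable def Phi (t : ℝ) : ℝ := ∫ u in Set.Iic t, phi u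

lemma phi_eq (t : ℝ) : phi t = Real.exp (-(1/2) * t^2) * (Real.sqrt (2*Real.pi))⁻¹ := by
  rw [phi]; ring_nf

lemma phi_pos (t : ℝ) : 0 < phi t := by
  rw [phi_eq]; positivity

lemma integrable_phi : Integrable phi := by
  have := (integrable_exp_neg_mul_sq (b := 1/2) (by norm_num)).mul_const (Real.sqrt (2*Real.pi))⁻¹
  exact this.congr (by filter_upwards with t using (phi_eq t).symm)

lemma integral_phi : ∫ t, phi t = 1 := by
  have h2 : ∫ t, phi t = (∫ t, Real.exp (-(1/2) * t^2)) * (Real.sqrt (2*Real.pi))⁻¹ := by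
    rw [← integral_mul_const]; congr 1; funext t; rw [phi_eq]
  rw [h2, integral_gaussian, show π / (1/2 : ℝ) = 2 * π by ring,
    mul_inv_cancel₀ (by positivity)]

lemma continuous_phi : Continuous phi := by
  unfold phi; fun_prop

lemma hasDerivAt_phi (t : ℝ) : HasDerivAt phi (-t * phi t) t := by
  have h1 : HasDerivAt (fun t : ℝ => -t^2/2) (-t) t := by
    have := ((hasDerivAt_pow 2 t).neg.div_const 2)
    refine this.congr_deriv ?_
    simp
    ring
  have h2 := (Real.hasDerivAt_exp (-t^2/2)).comp t h1
  have h3 := h2.div_const (Real.sqrt (2*Real.pi))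
  unfold phi
  refine h3.congr_deriv ?_
  simp [phi, Function.comp]
  ring

lemma tendsto_phi_atTop : Tendsto phi atTop (nhds 0) := by
  have hsq : Tendsto (fun t : ℝ => t^2) atTop atTop := tendsto_pow_atTop two_ne_zero
  have hneg : Tendsto (fun t : ℝ => -t^2/2) atTop atBot :=
    (tendsto_neg_atBot_iff.mpr hsq).atBot_div_const (by norm_num)
  have h2 : Tendsto (fun t : ℝ => Real.exp (-t^2/2) / Real.sqrt (2*Real.pi)) atTop (nhds (0 / Real.sqrt (2*Real.pi))) :=
    ((Real.tendsto_exp_atBot.comp hneg)).div_const (Real.sqrt (2*Real.pi))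
  rw [zero_div] at h2
  exact h2

lemma hasDerivAt_Phi (t : ℝ) : HasDerivAt Phi (phi t) t := by
  have key : ∀ s : ℝ, Phi s = Phi 0 + ∫ u in (0:ℝ)..s, phi u := by
    intro s
    rw [← intervalIntegral.integral_Iic_sub_Iic integrable_phi.integrableOn
      integrable_phi.integrableOn]
    simp [Phi]
  have h : HasDerivAt (fun s => Phi 0 + ∫ u in (0:ℝ)..s, phi u) (phi t) t := by
    apply HasDerivAt.const_add
    exact intervalIntegral.integral_hasDerivAt_right
      integrable_phi.intervalIntegrable
      (continuous_phi.stronglyMeasurableAtFilter _ _)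
      continuous_phi.continuousAt
  exact h.congr_of_eventuallyEq (by filter_upwards with s using key s)

lemma tendsto_Phi_atTop : Tendsto Phi atTop (nhds 1) := by
  rw [← integral_phi]
  have := MeasureTheory.tendsto_setIntegral_of_monotone (s := fun t : ℝ => Iic t)
    (f := phi) (μ := volume) (fun t => measurableSet_Iic)
    (fun a b hab => Iic_subset_Iic.2 hab) (by rw [iUnion_Iic]; exact integrable_phi.integrableOn)
  simpa [show Phi = fun t => ∫ u in Iic t, phi u from rfl, iUnion_Iic] using this

/-- Key representation: the activation reduction as an integral. -/
lemma key_repr (k a : ℝ) (hk : 0 < k) :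
    ∫ v in Ioi a, (v - a) * phi (v/k)
      = k^2 * phi (a/k) - k * (1 - Phi (a/k)) * a := by
  set F : ℝ → ℝ := fun v => -(k^2 * phi (v/k)) - a * k * Phi (v/k) with hF
  have hderiv : ∀ v : ℝ, HasDerivAt F ((v - a) * phi (v/k)) v := by
    intro v
    have hdiv : HasDerivAt (fun v : ℝ => v / k) (1/k) v := (hasDerivAt_id v).div_const k
    have h1 : HasDerivAt (fun v => phi (v/k)) (-(v/k) * phi (v/k) * (1/k)) v :=
      by have := (hasDerivAt_phi (v/k)).comp v hdiv; exact this
    have h2 : HasDerivAt (fun v => Phi (v/k)) (phi (v/k) * (1/k)) v :=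
      by have := (hasDerivAt_Phi (v/k)).comp v hdiv; exact this
    have := ((h1.const_mul (k^2)).neg).sub (h2.const_mul (a * k))
    refine this.congr_deriv ?_
    field_simp
  have htend : Tendsto F atTop (nhds (-(a * k))) := by
    have h1 : Tendsto (fun v : ℝ => v / k) atTop atTop := tendsto_id.atTop_div_const hk
    have h2 := ((tendsto_phi_atTop.comp h1).const_mul (k^2)).neg
    have h3 := (tendsto_Phi_atTop.comp h1).const_mul (a * k)
    have := h2.sub h3
    simpa using this
  have hpos : ∀ v ∈ Ioi a, 0 ≤ (v - a) * phi (v/k) := fun v hv =>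
    mul_nonneg (by simp at hv; linarith) (phi_pos _).le
  have := integral_Ioi_of_hasDerivAt_of_nonneg' (g := F)
    (g' := fun v => (v - a) * phi (v/k)) (fun v _ => hderiv v) hpos htend
  rw [this, hF]
  simp only
  ring

lemma integrableOn_key (k a : ℝ) (hk : 0 < k) :
    IntegrableOn (fun v => (v - a) * phi (v/k)) (Ioi a) := by
  set F : ℝ → ℝ := fun v => -(k^2 * phi (v/k)) - a * k * Phi (v/k) with hF
  have hderiv : ∀ v : ℝ, HasDerivAt F ((v - a) * phi (v/k)) v := by
    intro v
    have hdiv : HasDerivAt (fun v : ℝ => v / k) (1/k) v := (hasDerivAt_id v).div_const k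
    have h1 : HasDerivAt (fun v => phi (v/k)) (-(v/k) * phi (v/k) * (1/k)) v :=
      by have := (hasDerivAt_phi (v/k)).comp v hdiv; exact this
    have h2 : HasDerivAt (fun v => Phi (v/k)) (phi (v/k) * (1/k)) v :=
      by have := (hasDerivAt_Phi (v/k)).comp v hdiv; exact this
    have := ((h1.const_mul (k^2)).neg).sub (h2.const_mul (a * k))
    refine this.congr_deriv ?_
    field_simp
  have htend : Tendsto F atTop (nhds (-(a * k))) := by
    have h1 : Tendsto (fun v : ℝ => v / k) atTop atTop := tendsto_id.atTop_div_const hk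
    have h2 := ((tendsto_phi_atTop.comp h1).const_mul (k^2)).neg
    have h3 := (tendsto_Phi_atTop.comp h1).const_mul (a * k)
    have := h2.sub h3
    simpa using this
  have hpos : ∀ v ∈ Ioi a, 0 ≤ (v - a) * phi (v/k) := fun v hv =>
    mul_nonneg (by simp at hv; linarith) (phi_pos _).le
  exact integrableOn_Ioi_deriv_of_nonneg' (fun v _ => hderiv v) hpos htend

theorem stmt16 (μ c σ ε : ℝ) (hε1 : -1 < ε) (hε2 : ε < 0) (hσ : 0 < σ) (hc : μ < c) :
    phi ((c-μ)/σ) * σ - (1 - Phi ((c-μ)/σ)) * (c-μ)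
      < (1-ε)^2 * phi ((c-μ)/((1-ε)*σ)) * σ
        - (1-ε) * (1 - Phi ((c-μ)/((1-ε)*σ))) * (c-μ) := by
  set k := 1 - ε with hkdef
  have hk1 : 1 < k := by simp [hkdef]; linarith
  have hk : 0 < k := by linarith
  set a := (c - μ) / σ with hadef
  have ha : 0 < a := div_pos (by linarith) hσ
  have hcm : c - μ = a * σ := by rw [hadef]; field_simp
  -- express both sides via integrals
  have hL := key_repr 1 a one_pos
  have hR := key_repr k a hk
  have ha2 : (c-μ)/((1-ε)*σ) = a / k := by
    rw [hcm]; field_simp; rw [hkdef]; exact div_self (by linarith)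
  -- strict inequality of integrals
  have hlt : (∫ v in Ioi a, (v - a) * phi (v/1)) < ∫ v in Ioi a, (v - a) * phi (v/k) := by
    rw [← sub_pos, ← MeasureTheory.integral_sub (integrableOn_key k a hk)
      (integrableOn_key 1 a one_pos)]
    rw [MeasureTheory.setIntegral_pos_iff_support_of_nonneg_ae]
    · -- support has positive measure
      have hsub : Ioi a ⊆ Function.support (fun v => (v - a) * phi (v/k) - (v - a) * phi (v/1))
          ∩ Ioi a := by
        intro v hv
        refine ⟨?_, hv⟩
        simp only [Function.mem_support]
        have hva : a < v := hv
        have hphi : phi (v/1) < phi (v/k) := by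
          rw [phi_eq, phi_eq]
          apply mul_lt_mul_of_pos_right _ (by positivity)
          apply Real.exp_lt_exp.2
          have h1 : 0 < v := lt_trans ha hva
          have h2 : v / k < v / 1 := by
            apply div_lt_div_of_pos_left h1 (by norm_num) hk1
          have h3 : (v/k)^2 < (v/1)^2 := by
            apply pow_lt_pow_left₀ h2 (by positivity) (by norm_num)
          nlinarith
        have : 0 < (v - a) * (phi (v/k) - phi (v/1)) :=
          mul_pos (by linarith) (by linarith)
        intro hcon
        nlinarith
      have : volume (Ioi a) ≤ volume _ := measure_mono hsub
      calc (0:ENNReal) < volume (Ioi a) := by simp [Real.volume_Ioi]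
        _ ≤ _ := this
    · filter_upwards [ae_restrict_mem measurableSet_Ioi] with v hv
      simp only [Pi.zero_apply]
      have hva : a < v := hv
      have h1 : 0 < v := lt_trans ha hva
      have h2 : v / k < v / 1 := div_lt_div_of_pos_left h1 (by norm_num) hk1
      have hphi : phi (v/1) ≤ phi (v/k) := by
        rw [phi_eq, phi_eq]
        apply mul_le_mul_of_nonneg_right _ (by positivity)
        apply Real.exp_le_exp.2
        have h3 : (v/k)^2 ≤ (v/1)^2 := by
          apply pow_le_pow_left₀ (by positivity) h2.le
        nlinarith
      nlinarith
    · exact (integrableOn_key k a hk).sub (integrableOn_key 1 a one_pos)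
  rw [hL, hR] at hlt
  have hσ' : σ > 0 := hσ
  have := mul_lt_mul_of_pos_right hlt hσ
  have hk3 : a * σ / (k * σ) = a / k := by
    field_simp
  rw [hcm, hk3]
  simp only [div_one, one_pow, one_mul] at this
  ring_nf at this ⊢
  linarith
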